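/- Let P = {p_1,...,p_n} and Q = {q_1,...,q_n} be orthonormal sets in R^d with 2n < d, and suppose there is a unit vector ĉ with Σ_i |⟨p_i, ĉ⟩| − Σ_i |⟨q_i, ĉ⟩| > (1/2)√n. Then for z ≥ 2 there exists a unit vector c with Σ_{i=1}^n (2 − 2|⟨q_i,c⟩|)^{z/2} − Σ_{i=1}^n (2 − 2|⟨p_i,c⟩|)^{z/2} ≥ 2^{z/2}·(z/8)·√n − 2^{z/2}·(z/8)·(z/2 − 1). -/

import Mathlib

open scoped RealInnerProductSpace


lemma exists_c {d n : ℕ} (hd : 2 * n < d)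
    (p q : Fin n → EuclideanSpace ℝ (Fin d))
    (chat : EuclideanSpace ℝ (Fin d)) (hchat : ‖chat‖ = 1) :
    ∃ c : EuclideanSpace ℝ (Fin d), ‖c‖ = 1 ∧
      (∀ i, ⟪p i, c⟫ = (1/2) * ⟪p i, chat⟫) ∧
      (∀ i, ⟪q i, c⟫ = (1/2) * ⟪q i, chat⟫) := by
  classical
  set K : Submodule ℝ (EuclideanSpace ℝ (Fin d)) :=
    Submodule.span ℝ (Set.range (Sum.elim p q)) with hK
  have hpK : ∀ i, p i ∈ K := fun i =>
    Submodule.subset_span ⟨Sum.inl i, rfl⟩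
  have hqK : ∀ i, q i ∈ K := fun i =>
    Submodule.subset_span ⟨Sum.inr i, rfl⟩
  have hKrank : Module.finrank ℝ K ≤ 2 * n := by
    have := finrank_span_le_card (R := ℝ) (Set.range (Sum.elim p q))
    refine le_trans this ?_
    rw [Set.toFinset_card]
    have h2 := Fintype.card_range_le (Sum.elim p q)
    simpa [Fintype.card_sum, two_mul] using h2
  -- orthogonal complement is nontrivial
  have horth : 0 < Module.finrank ℝ Kᗮ := by
    have h1 := Submodule.finrank_add_finrank_orthogonal K
    have h2 : Module.finrank ℝ (EuclideanSpace ℝ (Fin d)) = d := by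
      simp [finrank_euclideanSpace]
    omega
  obtain ⟨x, hxK, hx0⟩ : ∃ x ∈ Kᗮ, x ≠ 0 := by
    rw [Module.finrank_pos_iff] at horth
    obtain ⟨⟨x, hx⟩, hne⟩ := exists_ne (0 : Kᗮ)
    exact ⟨x, hx, fun h => hne (Subtype.ext h)⟩
  obtain ⟨e, heK, hen⟩ : ∃ e : EuclideanSpace ℝ (Fin d), e ∈ Kᗮ ∧ ‖e‖ = 1 := by
    have hxn : ‖x‖ ≠ 0 := norm_ne_zero_iff.2 hx0
    refine ⟨‖x‖⁻¹ • x, Kᗮ.smul_mem _ hxK, ?_⟩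
    rw [norm_smul, norm_inv, norm_norm, inv_mul_cancel₀ hxn]
  obtain ⟨u, huK, hsub⟩ : ∃ u : EuclideanSpace ℝ (Fin d), u ∈ K ∧ chat - u ∈ Kᗮ :=
    ⟨_, (K.orthogonalProjection chat).2, K.sub_starProjection_mem_orthogonal chat⟩
  have hpu : ∀ i, ⟪p i, u⟫ = ⟪p i, chat⟫ := by
    intro i
    have := Submodule.inner_right_of_mem_orthogonal (hpK i) hsub
    rw [inner_sub_right] at this
    linarith
  have hqu : ∀ i, ⟪q i, u⟫ = ⟪q i, chat⟫ := by
    intro i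
    have := Submodule.inner_right_of_mem_orthogonal (hqK i) hsub
    rw [inner_sub_right] at this
    linarith
  have hue : ⟪u, e⟫ = 0 := Submodule.inner_right_of_mem_orthogonal huK heK
  have hpe : ∀ i, ⟪p i, e⟫ = 0 := fun i => Submodule.inner_right_of_mem_orthogonal (hpK i) heK
  have hqe : ∀ i, ⟪q i, e⟫ = 0 := fun i => Submodule.inner_right_of_mem_orthogonal (hqK i) heK
  have hunorm : ‖u‖ ≤ 1 := by
    have h1 : ⟪u, chat - u⟫ = 0 := Submodule.inner_right_of_mem_orthogonal huK hsub
    have h2 : ‖chat‖^2 = ‖u‖^2 + 2*⟪u, chat - u⟫ + ‖chat - u‖^2 := by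
      have := norm_add_sq_real u (chat - u)
      simpa using this
    nlinarith [norm_nonneg u, norm_nonneg (chat - u)]
  set r : ℝ := Real.sqrt (1 - ‖u‖^2/4) with hr
  have hrnn : 0 ≤ r := Real.sqrt_nonneg _
  have hrsq : r^2 = 1 - ‖u‖^2/4 := by
    rw [hr, Real.sq_sqrt]
    nlinarith [norm_nonneg u]
  refine ⟨(1/2:ℝ) • u + r • e, ?_, ?_, ?_⟩
  · have hinner : ⟪(1/2:ℝ) • u, r • e⟫ = 0 := by
      rw [real_inner_smul_left, real_inner_smul_right, hue]; ring
    have h2 : ‖(1/2:ℝ) • u + r • e‖^2 = ‖(1/2:ℝ) • u‖^2 + 2*⟪(1/2:ℝ) • u, r • e⟫ + ‖r • e‖^2 :=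
      norm_add_sq_real _ _
    rw [hinner] at h2
    have h3 : ‖(1/2:ℝ) • u‖ = (1/2) * ‖u‖ := by
      rw [norm_smul]; simp
    have h4 : ‖r • e‖ = r := by
      rw [norm_smul, hen, Real.norm_eq_abs, abs_of_nonneg hrnn, mul_one]
    rw [h3, h4] at h2
    have h5 : ‖(1/2:ℝ) • u + r • e‖^2 = 1 := by rw [h2, hrsq]; ring
    set N := ‖(1/2:ℝ) • u + r • e‖ with hN
    have h7 : 0 ≤ N := norm_nonneg _
    nlinarith [h5, h7]
  · intro i
    rw [inner_add_right, real_inner_smul_right, real_inner_smul_right, hpe, hpu]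
    ring
  · intro i
    rw [inner_add_right, real_inner_smul_right, real_inner_smul_right, hqe, hqu]
    ring


-- key: (1-x)^t ≥ 1 - 2tx for x ∈ [0,1/2], t ≥ 0
lemma key_lb {x t : ℝ} (hx0 : 0 ≤ x) (hx : x ≤ 1/2) (ht : 0 ≤ t) :
    1 - 2*t*x ≤ (1-x) ^ t := by
  have h1 : (0:ℝ) < 1 - x := by linarith
  have hlog : -(2*x) ≤ Real.log (1-x) := by
    rw [Real.le_log_iff_exp_le h1, Real.exp_neg]
    have h2 : (1:ℝ) + 2*x ≤ Real.exp (2*x) := by linarith [Real.add_one_le_exp (2*x)]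
    have h3 : (0:ℝ) < 1 + 2*x := by linarith
    have h4 : (Real.exp (2*x))⁻¹ ≤ (1 + 2*x)⁻¹ := by
      apply inv_anti₀ h3 h2
    have h5 : (1 + 2*x)⁻¹ ≤ 1 - x := by
      rw [inv_le_iff_one_le_mul₀ h3]
      nlinarith
    linarith
  have : 1 + t * Real.log (1-x) ≤ Real.exp (t * Real.log (1-x)) := by
    linarith [Real.add_one_le_exp (t * Real.log (1-x))]
  rw [Real.rpow_def_of_pos h1]
  have h6 : t * (-(2*x)) ≤ t * Real.log (1-x) := mul_le_mul_of_nonneg_left hlog ht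
  rw [mul_comm (Real.log (1-x)) t]
  nlinarith

-- Taylor upper bound
lemma taylor_ub {x s : ℝ} (hx0 : 0 ≤ x) (hx : x ≤ 1/2) (hs : 1 ≤ s) :
    (1-x) ^ s ≤ 1 - s*x + s*(s-1)*x^2 := by
  set f : ℝ → ℝ := fun y => 1 - s*y + s*(s-1)*y^2 - (1-y)^s with hf
  have hderiv : ∀ y ∈ Set.Icc (0:ℝ) (1/2), HasDerivAt f (-s + s*(s-1)*(2*y) + s * (1-y)^(s-1)) y := by
    intro y hy
    have h1 : HasDerivAt (fun y:ℝ => 1 - y) (-1) y := by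
      simpa using (hasDerivAt_id y).const_sub 1
    have h2 : HasDerivAt (fun y:ℝ => (1-y)^s) ((-1) * s * (1-y)^(s-1)) y :=
      h1.rpow_const (Or.inr hs)
    have h3 : HasDerivAt (fun y:ℝ => 1 - s*y + s*(s-1)*y^2) (-s + s*(s-1)*(2*y)) y := by
      have := (((hasDerivAt_id y).const_mul s).const_sub 1).add
        (((hasDerivAt_pow 2 y)).const_mul (s*(s-1)))
      convert this using 1
      · rfl
      · rfl
      · rfl
      · rw [show (2:ℕ) - 1 = 1 from rfl, pow_one]
        push_cast
        ring
    have := h3.sub h2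
    convert this using 1
    · rfl
    · rfl
    · rfl
    · ring
  have hmono : MonotoneOn f (Set.Icc (0:ℝ) (1/2)) := by
    apply monotoneOn_of_deriv_nonneg (convex_Icc _ _)
    · exact fun y hy => ((hderiv y hy).continuousAt).continuousWithinAt
    · intro y hy
      rw [interior_Icc] at hy
      exact ((hderiv y (Set.mem_Icc_of_Ioo hy)).differentiableAt).differentiableWithinAt
    · intro y hy
      rw [interior_Icc] at hy
      rw [(hderiv y (Set.mem_Icc_of_Ioo hy)).deriv]
      have hk := key_lb (le_of_lt hy.1) (le_of_lt hy.2) (by linarith : (0:ℝ) ≤ s - 1)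
      have hs0 : (0:ℝ) < s := by linarith
      nlinarith
  have h0 : f 0 ≤ f x := hmono (by norm_num) ⟨hx0, hx⟩ hx0
  have hf0 : f 0 = 0 := by simp [hf, Real.one_rpow]
  have : 0 ≤ f x := by linarith
  simp only [hf] at this
  linarith

-- Bernoulli lower bound
lemma bern_lb {x s : ℝ} (hx0 : 0 ≤ x) (hx : x ≤ 1) (hs : 1 ≤ s) :
    1 - s*x ≤ (1-x) ^ s := by
  have := one_add_mul_self_le_rpow_one_add (s := -x) (by linarith) hs
  simpa [mul_neg, ← sub_eq_add_neg] using this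

theorem stmt_9 {d n : ℕ} (hd : 2 * n < d)
    (p q : Fin n → EuclideanSpace ℝ (Fin d))
    (hp : Orthonormal ℝ p) (hq : Orthonormal ℝ q)
    (chat : EuclideanSpace ℝ (Fin d)) (hchat : ‖chat‖ = 1)
    (hgap : (1/2) * Real.sqrt n < (∑ i, |⟪p i, chat⟫|) - ∑ i, |⟪q i, chat⟫|)
    (z : ℝ) (hz : 2 ≤ z) :
    ∃ c : EuclideanSpace ℝ (Fin d), ‖c‖ = 1 ∧
      (2:ℝ)^(z/2) * (z/8) * Real.sqrt n - (2:ℝ)^(z/2) * (z/8) * (z/2 - 1)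
        ≤ (∑ i, (2 - 2 * |⟪q i, c⟫|) ^ (z/2)) - ∑ i, (2 - 2 * |⟪p i, c⟫|) ^ (z/2) := by
  obtain ⟨c, hc1, hpc, hqc⟩ := exists_c hd p q chat hchat
  refine ⟨c, hc1, ?_⟩
  set s : ℝ := z/2 with hs
  have hs1 : 1 ≤ s := by rw [hs]; linarith
  have hzs : z = 2*s := by rw [hs]; ring
  set A : ℝ := ∑ i, |⟪p i, chat⟫| with hA
  set B : ℝ := ∑ i, |⟪q i, chat⟫| with hBdef
  set S2 : ℝ := ∑ i, ⟪p i, chat⟫^2 with hS2def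
  have hP : (0:ℝ) < 2^s := Real.rpow_pos_of_pos two_pos s
  have habs_p : ∀ i, |⟪p i, c⟫| = |⟪p i, chat⟫|/2 := by
    intro i
    rw [hpc i, abs_mul, abs_of_pos (by norm_num : (0:ℝ) < 1/2)]
    ring
  have habs_q : ∀ i, |⟪q i, c⟫| = |⟪q i, chat⟫|/2 := by
    intro i
    rw [hqc i, abs_mul, abs_of_pos (by norm_num : (0:ℝ) < 1/2)]
    ring
  have hle_p : ∀ i, |⟪p i, chat⟫| ≤ 1 := by
    intro i
    have h1 := abs_real_inner_le_norm (p i) chat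
    rw [hp.1 i, hchat] at h1
    simpa using h1
  have hle_q : ∀ i, |⟪q i, chat⟫| ≤ 1 := by
    intro i
    have h1 := abs_real_inner_le_norm (q i) chat
    rw [hq.1 i, hchat] at h1
    simpa using h1
  -- per-term lower bound for q
  have hBt : ∀ i, (2:ℝ)^s * (1 - s*(|⟪q i, chat⟫|/2)) ≤ (2 - 2*|⟪q i, c⟫|) ^ s := by
    intro i
    set x : ℝ := |⟪q i, chat⟫|/2 with hx
    have hx0 : 0 ≤ x := by positivity
    have hx1 : x ≤ 1 := by have := hle_q i; rw [hx]; linarith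
    have h2 : (2:ℝ) - 2*|⟪q i, c⟫| = 2*(1-x) := by rw [habs_q i]; ring
    rw [h2, Real.mul_rpow (by norm_num) (by linarith)]
    exact mul_le_mul_of_nonneg_left (bern_lb hx0 hx1 hs1) (Real.rpow_nonneg (by norm_num) s)
  -- per-term upper bound for p
  have hAt : ∀ i, (2 - 2*|⟪p i, c⟫|) ^ s
      ≤ (2:ℝ)^s * (1 - s*(|⟪p i, chat⟫|/2) + s*(s-1)*((|⟪p i, chat⟫|/2)^2)) := by
    intro i
    set x : ℝ := |⟪p i, chat⟫|/2 with hx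
    have hx0 : 0 ≤ x := by positivity
    have hx1 : x ≤ 1/2 := by have := hle_p i; rw [hx]; linarith
    have h2 : (2:ℝ) - 2*|⟪p i, c⟫| = 2*(1-x) := by rw [habs_p i]; ring
    rw [h2, Real.mul_rpow (by norm_num) (by linarith)]
    exact mul_le_mul_of_nonneg_left (taylor_ub hx0 hx1 hs1) (Real.rpow_nonneg (by norm_num) s)
  -- summed bounds
  have sumQ : (n:ℝ)*2^s - (2^s*s/2)*B ≤ ∑ i, (2 - 2*|⟪q i, c⟫|) ^ s := by
    have h := Finset.sum_le_sum (fun i (_ : i ∈ Finset.univ) => hBt i)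
    have e1 : ∑ i, (2:ℝ)^s * (1 - s*(|⟪q i, chat⟫|/2))
        = (n:ℝ)*2^s - (2^s*s/2)*B := by
      have hcongr : ∀ i ∈ Finset.univ, (2:ℝ)^s * (1 - s*(|⟪q i, chat⟫|/2))
          = 2^s - (2^s*s/2)*|⟪q i, chat⟫| := fun i _ => by ring
      rw [Finset.sum_congr rfl hcongr, Finset.sum_sub_distrib, Finset.sum_const,
        ← Finset.mul_sum, ← hBdef]
      simp [Finset.card_univ]
    linarith [h, e1.ge]
  have sumP : ∑ i, (2 - 2*|⟪p i, c⟫|) ^ s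
      ≤ (n:ℝ)*2^s - (2^s*s/2)*A + (2^s*s*(s-1)/4)*S2 := by
    have h := Finset.sum_le_sum (fun i (_ : i ∈ Finset.univ) => hAt i)
    have e2 : ∑ i, (2:ℝ)^s * (1 - s*(|⟪p i, chat⟫|/2) + s*(s-1)*((|⟪p i, chat⟫|/2)^2))
        = (n:ℝ)*2^s - (2^s*s/2)*A + (2^s*s*(s-1)/4)*S2 := by
      have hcongr : ∀ i ∈ Finset.univ, (2:ℝ)^s * (1 - s*(|⟪p i, chat⟫|/2) + s*(s-1)*((|⟪p i, chat⟫|/2)^2))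
          = (2^s - (2^s*s/2)*|⟪p i, chat⟫|) + (2^s*s*(s-1)/4)*(⟪p i, chat⟫^2) := by
        intro i _
        have hsq : (|⟪p i, chat⟫|/2)^2 = ⟪p i, chat⟫^2/4 := by
          rw [div_pow, sq_abs]; norm_num
        rw [hsq]; ring
      rw [Finset.sum_congr rfl hcongr, Finset.sum_add_distrib, Finset.sum_sub_distrib,
        Finset.sum_const, ← Finset.mul_sum, ← Finset.mul_sum, ← hA, ← hS2def]
      simp [Finset.card_univ]
    linarith [h, e2.le]
  -- Bessel
  have hS2 : S2 ≤ 1 := by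
    have h := hp.sum_inner_products_le (x := chat) (s := Finset.univ)
    rw [hchat] at h
    simpa [Real.norm_eq_abs, sq_abs, hS2def] using h
  have hgap' : Real.sqrt n / 2 < A - B := by
    rw [hA, hBdef]; linarith
  have hsqn : 0 ≤ Real.sqrt n := Real.sqrt_nonneg _
  have hkey : (s/4)*Real.sqrt n - (s/4)*(s-1) ≤ (s/2)*(A-B) - (s*(s-1)/4)*S2 := by
    nlinarith [mul_nonneg (by linarith : (0:ℝ) ≤ s) (by linarith : (0:ℝ) ≤ s - 1),
      mul_le_mul_of_nonneg_left hS2 (mul_nonneg (by linarith : (0:ℝ) ≤ s) (by linarith : (0:ℝ) ≤ s - 1)),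
      mul_lt_mul_of_pos_left hgap' (by linarith : (0:ℝ) < s/2)]
  calc (2:ℝ)^(z/2) * (z/8) * Real.sqrt n - (2:ℝ)^(z/2) * (z/8) * (z/2 - 1)
      = 2^s * ((s/4)*Real.sqrt n - (s/4)*(s-1)) := by rw [hzs]; ring_nf
    _ ≤ 2^s * ((s/2)*(A-B) - (s*(s-1)/4)*S2) := mul_le_mul_of_nonneg_left hkey hP.le
    _ = ((n:ℝ)*2^s - (2^s*s/2)*B) - ((n:ℝ)*2^s - (2^s*s/2)*A + (2^s*s*(s-1)/4)*S2) := by ring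
    _ ≤ (∑ i, (2 - 2*|⟪q i, c⟫|) ^ s) - ∑ i, (2 - 2*|⟪p i, c⟫|) ^ s := by
        linarith [sumQ, sumP]
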